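/- Let N be a norm on ℝ^m with dual norm N_*, let V be a symmetric positive definite real m×m matrix, let ε ≥ 0, and set C := sup { ‖w‖_{V⁻¹} : w ∈ ℝ^m, N(w) ≤ 1 }. Then for all x̌, θ, θ' ∈ ℝ^m, | (⟨x̌, θ⟩ − ε·N_*(θ)) − (⟨x̌, θ'⟩ − ε·N_*(θ')) | ≤ ( ‖x̌‖_{V⁻¹} + ε·C ) · ‖θ − θ'‖_V. -/

import Mathlib

/-- Euclidean dot product on `ℝ^m`. -/
def dotp {m : ℕ} (v w : Fin m → ℝ) : ℝ := ∑ i, v i * w i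

/-- Dual norm of a norm `N` on `ℝ^m`: `N_*(θ) = sup { ⟨v, θ⟩ : N v ≤ 1 }`. -/
noncomputable def dualN {m : ℕ} (N : (Fin m → ℝ) → ℝ) (θ : Fin m → ℝ) : ℝ :=
  sSup ((fun v => dotp v θ) '' {v | N v ≤ 1})

/-- The Mahalanobis-type norm `‖u‖_V = √(uᵀ V u)` associated with a matrix `V`. -/
noncomputable def normV {m : ℕ} (V : Matrix (Fin m) (Fin m) ℝ) (u : Fin m → ℝ) : ℝ :=
  Real.sqrt (dotp u (V.mulVec u))

namespace RRLaux

open Matrix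

variable {m : ℕ}

lemma dotp_eq (v w : Fin m → ℝ) : dotp v w = v ⬝ᵥ w := rfl

lemma dotp_mulVec_nonneg {W : Matrix (Fin m) (Fin m) ℝ} (hW : W.PosSemidef)
    (x : Fin m → ℝ) : 0 ≤ dotp x (W.mulVec x) := by
  simpa [dotp_eq] using hW.dotProduct_mulVec_nonneg x

lemma normV_nonneg (W : Matrix (Fin m) (Fin m) ℝ) (u : Fin m → ℝ) :
    0 ≤ normV W u := Real.sqrt_nonneg _

lemma normV_sq {W : Matrix (Fin m) (Fin m) ℝ} (hW : W.PosSemidef) (u : Fin m → ℝ) :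
    normV W u ^ 2 = dotp u (W.mulVec u) := by
  rw [normV, Real.sq_sqrt (dotp_mulVec_nonneg hW u)]

lemma W_symm {W : Matrix (Fin m) (Fin m) ℝ} (hW : W.IsHermitian) (i j : Fin m) :
    W i j = W j i := by
  have := congrFun (congrFun hW.eq i) j
  simpa [Matrix.conjTranspose_apply] using this.symm

lemma dotp_mulVec_symm {W : Matrix (Fin m) (Fin m) ℝ} (hW : W.IsHermitian)
    (x y : Fin m → ℝ) : dotp x (W.mulVec y) = dotp y (W.mulVec x) := by
  simp only [dotp, Matrix.mulVec, dotProduct, Finset.mul_sum]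
  rw [Finset.sum_comm]
  refine Finset.sum_congr rfl fun j _ => Finset.sum_congr rfl fun i _ => ?_
  rw [W_symm hW i j]; ring

/-- Cauchy–Schwarz for a positive definite bilinear form. -/
lemma cs_abs {W : Matrix (Fin m) (Fin m) ℝ} (hW : W.PosDef)
    (x y : Fin m → ℝ) : |dotp x (W.mulVec y)| ≤ normV W x * normV W y := by
  set a := dotp x (W.mulVec x) with ha
  set b := dotp x (W.mulVec y) with hb
  set c := dotp y (W.mulVec y) with hc
  have ha0 : 0 ≤ a := dotp_mulVec_nonneg hW.posSemidef x
  have hc0 : 0 ≤ c := dotp_mulVec_nonneg hW.posSemidef y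
  have hbsq : b ^ 2 ≤ a * c := by
    rcases eq_or_lt_of_le hc0 with hczero | hcpos
    · -- c = 0 forces y = 0
      have hy : y = 0 := by
        by_contra hy
        have := hW.dotProduct_mulVec_pos hy
        simp only [star_trivial] at this
        rw [← dotp_eq] at this
        exact absurd hczero.symm (ne_of_gt this)
      have : b = 0 := by simp [hb, hy, dotp]
      simp [this, mul_nonneg ha0 hc0]
    · have key : 0 ≤ c * (a * c - b ^ 2) := by
        have h0 : 0 ≤ dotp (c • x - b • y) (W.mulVec (c • x - b • y)) :=
          dotp_mulVec_nonneg hW.posSemidef _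
        have hsym : dotp y (W.mulVec x) = b := by
          rw [dotp_mulVec_symm hW.isHermitian y x, ← hb]
        have e2 : ∀ z : Fin m → ℝ, z ⬝ᵥ (W.mulVec (c • x - b • y))
            = c * (z ⬝ᵥ W.mulVec x) - b * (z ⬝ᵥ W.mulVec y) := by
          intro z
          rw [Matrix.mulVec_sub, Matrix.mulVec_smul, Matrix.mulVec_smul,
            dotProduct_sub, dotProduct_smul, dotProduct_smul,
            smul_eq_mul, smul_eq_mul]
        have e1 : dotp (c • x - b • y) (W.mulVec (c • x - b • y))
            = c * ((x : Fin m → ℝ) ⬝ᵥ W.mulVec (c • x - b • y))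
              - b * ((y : Fin m → ℝ) ⬝ᵥ W.mulVec (c • x - b • y)) := by
          rw [dotp_eq, sub_dotProduct, smul_dotProduct,
            smul_dotProduct, smul_eq_mul, smul_eq_mul]
        rw [e1, e2 x, e2 y] at h0
        simp only [dotp_eq] at ha hb hc hsym
        rw [← ha, ← hb, ← hc, hsym] at h0
        nlinarith [h0]
      nlinarith [hcpos]
  calc |b| = Real.sqrt (b ^ 2) := (Real.sqrt_sq_eq_abs b).symm
    _ ≤ Real.sqrt (a * c) := Real.sqrt_le_sqrt hbsq
    _ = normV W x * normV W y := by
        rw [Real.sqrt_mul ha0, normV, normV, ← ha, ← hc]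

lemma normV_neg (W : Matrix (Fin m) (Fin m) ℝ) (u : Fin m → ℝ) :
    normV W (-u) = normV W u := by
  simp [normV, dotp_eq, Matrix.mulVec_neg, dotProduct_neg, neg_dotProduct]

/-- Entrywise bound on `normV`. -/
lemma normV_le (W : Matrix (Fin m) (Fin m) ℝ) (w : Fin m → ℝ) :
    normV W w ≤ Real.sqrt (∑ i, ∑ j, |W i j|) * ‖w‖ := by
  have hS : (0:ℝ) ≤ ∑ i, ∑ j, |W i j| :=
    Finset.sum_nonneg fun i _ => Finset.sum_nonneg fun j _ => abs_nonneg _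
  have hbound : dotp w (W.mulVec w) ≤ (∑ i, ∑ j, |W i j|) * ‖w‖ ^ 2 := by
    calc dotp w (W.mulVec w) = ∑ i, ∑ j, w i * (W i j * w j) := by
          simp [dotp, Matrix.mulVec, dotProduct, Finset.mul_sum]
      _ ≤ ∑ i, ∑ j, |W i j| * ‖w‖ ^ 2 := by
          refine Finset.sum_le_sum fun i _ => Finset.sum_le_sum fun j _ => ?_
          have h1 : w i * (W i j * w j) ≤ |w i * (W i j * w j)| := le_abs_self _
          have h2 : |w i * (W i j * w j)| = |W i j| * (|w i| * |w j|) := by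
            rw [abs_mul, abs_mul]; ring
          have hwi : |w i| ≤ ‖w‖ := by
            simpa [Real.norm_eq_abs] using norm_le_pi_norm w i
          have hwj : |w j| ≤ ‖w‖ := by
            simpa [Real.norm_eq_abs] using norm_le_pi_norm w j
          have h3 : |w i| * |w j| ≤ ‖w‖ ^ 2 := by
            have := mul_le_mul hwi hwj (abs_nonneg _) (norm_nonneg w)
            nlinarith
          calc w i * (W i j * w j) ≤ |W i j| * (|w i| * |w j|) := h1.trans_eq h2
            _ ≤ |W i j| * ‖w‖ ^ 2 := mul_le_mul_of_nonneg_left h3 (abs_nonneg _)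
      _ = (∑ i, ∑ j, |W i j|) * ‖w‖ ^ 2 := by rw [Finset.sum_mul]; simp [Finset.sum_mul]
  calc normV W w = Real.sqrt (dotp w (W.mulVec w)) := rfl
    _ ≤ Real.sqrt ((∑ i, ∑ j, |W i j|) * ‖w‖ ^ 2) := Real.sqrt_le_sqrt hbound
    _ = Real.sqrt (∑ i, ∑ j, |W i j|) * ‖w‖ := by
        rw [Real.sqrt_mul hS, Real.sqrt_sq (norm_nonneg w)]

end RRLaux

section Nfacts

variable {m : ℕ} {N : (Fin m → ℝ) → ℝ}

lemma N_zero (hN_smul : ∀ (c : ℝ) (u : Fin m → ℝ), N (c • u) = |c| * N u) :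
    N 0 = 0 := by
  have := hN_smul 0 0
  simpa using this

lemma N_nonneg (hN_smul : ∀ (c : ℝ) (u : Fin m → ℝ), N (c • u) = |c| * N u)
    (hN_add : ∀ u w : Fin m → ℝ, N (u + w) ≤ N u + N w) (u : Fin m → ℝ) :
    0 ≤ N u := by
  have hneg : N (-u) = N u := by
    have := hN_smul (-1) u
    simpa using this
  have h := hN_add u (-u)
  rw [add_neg_cancel, N_zero hN_smul, hneg] at h
  linarith

lemma N_sum_le (hN_smul : ∀ (c : ℝ) (u : Fin m → ℝ), N (c • u) = |c| * N u)
    (hN_add : ∀ u w : Fin m → ℝ, N (u + w) ≤ N u + N w)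
    {α : Type*} (s : Finset α) (f : α → Fin m → ℝ) :
    N (∑ i ∈ s, f i) ≤ ∑ i ∈ s, N (f i) := by
  classical
  induction s using Finset.induction_on with
  | empty => simp [N_zero hN_smul]
  | insert _ _ h ih =>
    rename_i a s
    rw [Finset.sum_insert h, Finset.sum_insert h]
    exact (hN_add _ _).trans (by linarith)

lemma N_upper (hN_smul : ∀ (c : ℝ) (u : Fin m → ℝ), N (c • u) = |c| * N u)
    (hN_add : ∀ u w : Fin m → ℝ, N (u + w) ≤ N u + N w) (u : Fin m → ℝ) :
    N u ≤ (∑ i, N (Pi.single i 1)) * ‖u‖ := by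
  have hu : u = ∑ i, u i • (Pi.single i (1:ℝ) : Fin m → ℝ) := by
    funext j
    simp [Finset.sum_apply, Pi.single_apply, Finset.sum_ite_eq' Finset.univ j]
  calc N u = N (∑ i, u i • (Pi.single i (1:ℝ) : Fin m → ℝ)) := by rw [← hu]
    _ ≤ ∑ i, N (u i • (Pi.single i (1:ℝ) : Fin m → ℝ)) := N_sum_le hN_smul hN_add _ _
    _ = ∑ i, |u i| * N (Pi.single i (1:ℝ) : Fin m → ℝ) := by
        refine Finset.sum_congr rfl fun i _ => hN_smul _ _
    _ ≤ ∑ i, ‖u‖ * N (Pi.single i (1:ℝ)) := by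
        refine Finset.sum_le_sum fun i _ => ?_
        refine mul_le_mul_of_nonneg_right ?_ (N_nonneg hN_smul hN_add _)
        simpa [Real.norm_eq_abs] using norm_le_pi_norm u i
    _ = (∑ i, N (Pi.single i 1)) * ‖u‖ := by
        rw [Finset.sum_mul]
        exact Finset.sum_congr rfl fun i _ => mul_comm _ _

lemma N_continuous (hN_smul : ∀ (c : ℝ) (u : Fin m → ℝ), N (c • u) = |c| * N u)
    (hN_add : ∀ u w : Fin m → ℝ, N (u + w) ≤ N u + N w) :
    Continuous N := by
  set K : ℝ := ∑ i, N (Pi.single i 1) with hK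
  have hK0 : 0 ≤ K := Finset.sum_nonneg fun i _ => N_nonneg hN_smul hN_add _
  have hlip : LipschitzWith K.toNNReal N := by
    refine LipschitzWith.of_dist_le_mul fun u w => ?_
    have h1 : N u - N w ≤ N (u - w) := by
      have := hN_add (u - w) w
      rw [sub_add_cancel] at this
      linarith
    have h2 : N w - N u ≤ N (u - w) := by
      have hneg : N (w - u) = N (u - w) := by
        have := hN_smul (-1) (u - w)
        simpa [neg_sub] using this
      have := hN_add (w - u) u
      rw [sub_add_cancel] at this
      linarith [hneg]
    have h3 : |N u - N w| ≤ N (u - w) := abs_sub_le_iff.mpr ⟨h1, h2⟩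
    have h4 : N (u - w) ≤ K * ‖u - w‖ := N_upper hN_smul hN_add _
    rw [Real.dist_eq, dist_eq_norm]
    calc |N u - N w| ≤ K * ‖u - w‖ := h3.trans h4
      _ = ↑K.toNNReal * ‖u - w‖ := by rw [Real.coe_toNNReal _ hK0]
  exact hlip.continuous

lemma N_lower (hN_smul : ∀ (c : ℝ) (u : Fin m → ℝ), N (c • u) = |c| * N u)
    (hN_add : ∀ u w : Fin m → ℝ, N (u + w) ≤ N u + N w)
    (hN_def : ∀ u : Fin m → ℝ, N u = 0 ↔ u = 0) :
    ∃ c : ℝ, 0 < c ∧ ∀ u : Fin m → ℝ, c * ‖u‖ ≤ N u := by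
  rcases Nat.eq_zero_or_pos m with hm | hm
  · refine ⟨1, one_pos, fun u => ?_⟩
    have : u = 0 := by subst hm; exact Subsingleton.elim _ _
    simp [this, N_zero hN_smul]
  · have hne : (Metric.sphere (0 : Fin m → ℝ) 1).Nonempty := by
      set v : Fin m → ℝ := Pi.single (⟨0, hm⟩ : Fin m) (1:ℝ) with hvdef
      have hv : v ≠ 0 := by
        intro h
        have := congrFun h ⟨0, hm⟩
        simp [hvdef] at this
      refine ⟨‖v‖⁻¹ • v, ?_⟩
      rw [mem_sphere_zero_iff_norm, norm_smul, norm_inv, norm_norm,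
        inv_mul_cancel₀ (norm_ne_zero_iff.mpr hv)]
    obtain ⟨u₀, hu₀mem, hu₀min⟩ :=
      (isCompact_sphere (0 : Fin m → ℝ) 1).exists_isMinOn hne
        ((N_continuous hN_smul hN_add).continuousOn)
    have hu₀norm : ‖u₀‖ = 1 := mem_sphere_zero_iff_norm.mp hu₀mem
    have hu₀ne : u₀ ≠ 0 := fun h => by simp [h] at hu₀norm
    have hc : 0 < N u₀ :=
      lt_of_le_of_ne (N_nonneg hN_smul hN_add u₀) fun h => hu₀ne ((hN_def u₀).mp h.symm)
    refine ⟨N u₀, hc, fun u => ?_⟩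
    rcases eq_or_ne u 0 with hu | hu
    · simp [hu, N_zero hN_smul]
    · have hun : 0 < ‖u‖ := norm_pos_iff.mpr hu
      have hmem : ‖u‖⁻¹ • u ∈ Metric.sphere (0 : Fin m → ℝ) 1 := by
        rw [mem_sphere_zero_iff_norm, norm_smul, norm_inv, norm_norm,
          inv_mul_cancel₀ hun.ne']
      have hmin : N u₀ ≤ N (‖u‖⁻¹ • u) := hu₀min hmem
      have heq : N (‖u‖⁻¹ • u) = ‖u‖⁻¹ * N u := by
        rw [hN_smul, abs_of_nonneg (inv_nonneg.mpr hun.le)]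
      rw [heq] at hmin
      have : N u₀ * ‖u‖ ≤ (‖u‖⁻¹ * N u) * ‖u‖ :=
        mul_le_mul_of_nonneg_right hmin hun.le
      calc N u₀ * ‖u‖ ≤ (‖u‖⁻¹ * N u) * ‖u‖ := this
        _ = N u := by field_simp

end Nfacts

/-- Lipschitz estimate for the robust linear reward: with
`C = sup { ‖w‖_{V⁻¹} : N w ≤ 1 }`, the map `θ ↦ ⟨x̌, θ⟩ − ε·N_*(θ)` is
`(‖x̌‖_{V⁻¹} + ε·C)`-Lipschitz in the `V`-norm. -/
theorem robust_reward_lipschitz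
    (m : ℕ) (N : (Fin m → ℝ) → ℝ)
    (hN_smul : ∀ (c : ℝ) (u : Fin m → ℝ), N (c • u) = |c| * N u)
    (hN_add : ∀ u w : Fin m → ℝ, N (u + w) ≤ N u + N w)
    (hN_def : ∀ u : Fin m → ℝ, N u = 0 ↔ u = 0)
    (V : Matrix (Fin m) (Fin m) ℝ) (hV : V.PosDef)
    (ε : ℝ) (hε : 0 ≤ ε) :
    ∀ xc θ θ' : Fin m → ℝ,
      |(dotp xc θ - ε * dualN N θ) - (dotp xc θ' - ε * dualN N θ')|
        ≤ (normV V⁻¹ xc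
            + ε * sSup {r : ℝ | ∃ w : Fin m → ℝ, N w ≤ 1 ∧ r = normV V⁻¹ w})
          * normV V (θ - θ') := by
  classical
  open RRLaux Matrix in
  intro xc θ θ'
  have hWinv : (V⁻¹).PosDef := hV.inv
  have hdet : IsUnit V.det := (hV.det_pos.ne').isUnit
  have hinvV : ∀ y : Fin m → ℝ, V⁻¹.mulVec (V.mulVec y) = y := by
    intro y
    rw [Matrix.mulVec_mulVec, Matrix.nonsing_inv_mul V hdet, Matrix.one_mulVec]
  -- cross Cauchy-Schwarz: |⟨x,y⟩| ≤ ‖x‖_{V⁻¹} ‖y‖_V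
  have cross : ∀ x y : Fin m → ℝ, |dotp x y| ≤ normV V⁻¹ x * normV V y := by
    intro x y
    have h1 : dotp x y = dotp x (V⁻¹.mulVec (V.mulVec y)) := by rw [hinvV]
    have h2 : normV V⁻¹ (V.mulVec y) = normV V y := by
      unfold normV
      congr 1
      rw [hinvV]
      rw [dotp_eq, dotp_eq, dotProduct_comm]
    rw [h1]
    calc |dotp x (V⁻¹.mulVec (V.mulVec y))|
        ≤ normV V⁻¹ x * normV V⁻¹ (V.mulVec y) := cs_abs hWinv x _
      _ = normV V⁻¹ x * normV V y := by rw [h2]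
  obtain ⟨c, hc, hlow⟩ := N_lower hN_smul hN_add hN_def
  set K : ℝ := Real.sqrt (∑ i, ∑ j, |(V⁻¹) i j|) with hKdef
  -- the constant set
  set D : Set ℝ := {r : ℝ | ∃ w : Fin m → ℝ, N w ≤ 1 ∧ r = normV V⁻¹ w} with hD
  have hN0 : N (0 : Fin m → ℝ) = 0 := N_zero hN_smul
  have hnormV0 : normV V⁻¹ (0 : Fin m → ℝ) = 0 := by
    simp [normV, dotp]
  have hDne : D.Nonempty := ⟨normV V⁻¹ 0, 0, by simp [hN0], rfl⟩
  have hDbdd : BddAbove D := by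
    refine ⟨K * c⁻¹, fun r hr => ?_⟩
    obtain ⟨w, hw, rfl⟩ := hr
    have hwn : ‖w‖ ≤ c⁻¹ := by
      have := (hlow w).trans hw
      rw [← le_div_iff₀' hc] at this
      simpa [div_eq_mul_inv, mul_comm] using this
    calc normV V⁻¹ w ≤ K * ‖w‖ := normV_le V⁻¹ w
      _ ≤ K * c⁻¹ := mul_le_mul_of_nonneg_left hwn (Real.sqrt_nonneg _)
  set C : ℝ := sSup D with hCdef
  have hCle : ∀ w : Fin m → ℝ, N w ≤ 1 → normV V⁻¹ w ≤ C :=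
    fun w hw => le_csSup hDbdd ⟨w, hw, rfl⟩
  have hC0 : 0 ≤ C := by
    have := hCle 0 (by simp [hN0])
    rwa [hnormV0] at this
  -- sup sets for the dual norm
  have hSne : ∀ ψ : Fin m → ℝ, ((fun v => dotp v ψ) '' {v | N v ≤ 1}).Nonempty :=
    fun ψ => ⟨dotp 0 ψ, 0, by simp [hN0], rfl⟩
  have hSbdd : ∀ ψ : Fin m → ℝ, BddAbove ((fun v => dotp v ψ) '' {v | N v ≤ 1}) := by
    intro ψ
    refine ⟨C * normV V ψ, fun r hr => ?_⟩
    obtain ⟨v, hv, rfl⟩ := hr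
    calc dotp v ψ ≤ |dotp v ψ| := le_abs_self _
      _ ≤ normV V⁻¹ v * normV V ψ := cross v ψ
      _ ≤ C * normV V ψ :=
          mul_le_mul_of_nonneg_right (hCle v hv) (normV_nonneg _ _)
  -- one-sided Lipschitz bound for the dual norm
  have dual_lip : ∀ ψ ψ' : Fin m → ℝ,
      dualN N ψ - dualN N ψ' ≤ C * normV V (ψ - ψ') := by
    intro ψ ψ'
    rw [sub_le_iff_le_add]
    refine csSup_le (hSne ψ) ?_
    rintro r ⟨v, hv, rfl⟩
    have h1 : dotp v ψ = dotp v ψ' + dotp v (ψ - ψ') := by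
      simp only [dotp_eq]
      rw [← dotProduct_add]
      congr 1
      abel
    have h2 : dotp v ψ' ≤ dualN N ψ' := le_csSup (hSbdd ψ') ⟨v, hv, rfl⟩
    have h3 : dotp v (ψ - ψ') ≤ C * normV V (ψ - ψ') := by
      calc dotp v (ψ - ψ') ≤ |dotp v (ψ - ψ')| := le_abs_self _
        _ ≤ normV V⁻¹ v * normV V (ψ - ψ') := cross v _
        _ ≤ C * normV V (ψ - ψ') :=
            mul_le_mul_of_nonneg_right (hCle v hv) (normV_nonneg _ _)
    linarith
  have hnormsub : normV V (θ' - θ) = normV V (θ - θ') := by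
    have : θ' - θ = -(θ - θ') := by abel
    rw [this, normV_neg]
  have habsdual : |dualN N θ - dualN N θ'| ≤ C * normV V (θ - θ') := by
    refine abs_sub_le_iff.mpr ⟨dual_lip θ θ', ?_⟩
    have := dual_lip θ' θ
    rwa [hnormsub] at this
  have hdotsub : dotp xc θ - dotp xc θ' = dotp xc (θ - θ') := by
    simp only [dotp_eq]
    rw [← dotProduct_sub]
  have hδ : |dotp xc (θ - θ')| ≤ normV V⁻¹ xc * normV V (θ - θ') := cross xc _
  calc |(dotp xc θ - ε * dualN N θ) - (dotp xc θ' - ε * dualN N θ')|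
      = |(dotp xc θ - dotp xc θ') - ε * (dualN N θ - dualN N θ')| := by ring_nf
    _ ≤ |dotp xc θ - dotp xc θ'| + |ε * (dualN N θ - dualN N θ')| := abs_sub _ _
    _ = |dotp xc (θ - θ')| + ε * |dualN N θ - dualN N θ'| := by
        rw [hdotsub, abs_mul, abs_of_nonneg hε]
    _ ≤ normV V⁻¹ xc * normV V (θ - θ') + ε * (C * normV V (θ - θ')) := by
        refine add_le_add hδ (mul_le_mul_of_nonneg_left habsdual hε)
    _ = (normV V⁻¹ xc + ε * C) * normV V (θ - θ') := by ring
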